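/- arXiv:math-ph/0307002 — 3 statements merged into one kernel-verified Lean document; each statement's English description precedes it below -/
import Mathlib

section
/- Let P and Q be orthogonal projections on a Hilbert space with ‖P − Q‖ < 1. Then the pair (P,Q) is Fredholm and ind(P,Q) = 0. -/
/-- A bounded operator between normed spaces is Fredholm: finite-dimensional kernel,
finite-dimensional cokernel, and closed range. -/
def IsFredholmOp {E F : Type*} [NormedAddCommGroup E] [NormedSpace ℂ E]
    [NormedAddCommGroup F] [NormedSpace ℂ F] (T : E →L[ℂ] F) : Prop :=
  FiniteDimensional ℂ (LinearMap.ker (T : E →ₗ[ℂ] F)) ∧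
    FiniteDimensional ℂ (F ⧸ LinearMap.range (T : E →ₗ[ℂ] F)) ∧
    IsClosed (LinearMap.range (T : E →ₗ[ℂ] F) : Set F)

/-- The operator `T = QP : Ran P → Ran Q` associated to a pair of projections. -/
noncomputable def projPairOp {H : Type*} [NormedAddCommGroup H] [InnerProductSpace ℂ H]
    [CompleteSpace H] (P Q : H →L[ℂ] H) :
    (LinearMap.range (P : H →ₗ[ℂ] H)) →L[ℂ] (LinearMap.range (Q : H →ₗ[ℂ] H)) :=
  ContinuousLinearMap.codRestrict (Q.comp (LinearMap.range (P : H →ₗ[ℂ] H)).subtypeL)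
    (LinearMap.range (Q : H →ₗ[ℂ] H)) (fun x => ⟨(x : H), rfl⟩)

local notation "⟪" x ", " y "⟫" => @inner ℂ _ _ x y

lemma range_closed_of_idem {H : Type*} [NormedAddCommGroup H] [InnerProductSpace ℂ H]
    [CompleteSpace H] (P : H →L[ℂ] H) (hPidem : IsIdempotentElem P) :
    IsClosed (LinearMap.range (P : H →ₗ[ℂ] H) : Set H) := by
  have : (LinearMap.range (P : H →ₗ[ℂ] H) : Set H) = {x | P x = x} := by
    ext x
    constructor
    · rintro ⟨y, rfl⟩
      exact ContinuousLinearMap.ext_iff.1 hPidem y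
    · intro hx; exact ⟨x, hx⟩
  rw [this]
  exact isClosed_eq P.continuous continuous_id

set_option maxHeartbeats 2000000 in
/-- orthogonal projections with `‖P − Q‖ < 1` form a Fredholm pair and
`ind(P,Q) = dim Ker T − dim (Ran T)ᗮ = 0`, where `T = QP : Ran P → Ran Q`. -/
theorem index_zero_of_norm_lt_one {H : Type*} [NormedAddCommGroup H]
    [InnerProductSpace ℂ H] [CompleteSpace H]
    (P Q : H →L[ℂ] H)
    (hPsa : IsSelfAdjoint P) (hPidem : IsIdempotentElem P)
    (hQsa : IsSelfAdjoint Q) (hQidem : IsIdempotentElem Q)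
    (hnorm : ‖P - Q‖ < 1) :
    IsFredholmOp (projPairOp P Q) ∧
      (Module.finrank ℂ (LinearMap.ker (projPairOp P Q).toLinearMap) : ℤ) -
        (Module.finrank ℂ ((LinearMap.range (projPairOp P Q).toLinearMap)ᗮ) : ℤ) = 0 := by
  set T := projPairOp P Q with hTdef
  haveI : CompleteSpace (LinearMap.range (P : H →ₗ[ℂ] H)) :=
    (range_closed_of_idem P hPidem).completeSpace_coe
  haveI : CompleteSpace (LinearMap.range (Q : H →ₗ[ℂ] H)) :=
    (range_closed_of_idem Q hQidem).completeSpace_coe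
  have hPfix : ∀ x : LinearMap.range (P : H →ₗ[ℂ] H), P (x : H) = (x : H) := by
    rintro ⟨x, y, rfl⟩
    exact ContinuousLinearMap.ext_iff.1 hPidem y
  have hQfix : ∀ y : LinearMap.range (Q : H →ₗ[ℂ] H), Q (y : H) = (y : H) := by
    rintro ⟨x, y, rfl⟩
    exact ContinuousLinearMap.ext_iff.1 hQidem y
  have hTapp : ∀ x : LinearMap.range (P : H →ₗ[ℂ] H), ((T x : H)) = Q (x : H) := fun x => rfl
  set d := ‖P - Q‖ with hd
  have hd0 : 0 ≤ d := norm_nonneg _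
  have hc : 0 < 1 - d := by linarith
  -- lower bound
  have hlow : ∀ x : LinearMap.range (P : H →ₗ[ℂ] H), (1 - d) * ‖x‖ ≤ ‖T x‖ := by
    intro x
    have h1 : ‖(x : H) - Q (x : H)‖ ≤ d * ‖(x : H)‖ := by
      have := (P - Q).le_opNorm (x : H)
      simpa [ContinuousLinearMap.sub_apply, hPfix x] using this
    have h2 : ‖(x : H)‖ - ‖(x : H) - Q (x : H)‖ ≤ ‖Q (x : H)‖ := by
      have := norm_sub_norm_le (x : H) ((x : H) - Q (x : H))
      simpa using this
    have e1 : ‖T x‖ = ‖Q (x : H)‖ := rfl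
    have e2 : ‖x‖ = ‖(x : H)‖ := rfl
    rw [e1, e2]
    nlinarith
  have hanti : AntilipschitzWith ((1 - d)⁻¹).toNNReal T := by
    apply T.antilipschitz_of_bound
    intro x
    rw [Real.coe_toNNReal _ (le_of_lt (inv_pos.2 hc))]
    calc ‖x‖ = (1 - d)⁻¹ * ((1 - d) * ‖x‖) := by field_simp
      _ ≤ (1 - d)⁻¹ * ‖T x‖ :=
        mul_le_mul_of_nonneg_left (hlow x) (le_of_lt (inv_pos.2 hc))
  have hker : LinearMap.ker T.toLinearMap = ⊥ := LinearMap.ker_eq_bot.2 hanti.injective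
  have hclosed : IsClosed (LinearMap.range T.toLinearMap : Set (LinearMap.range (Q : H →ₗ[ℂ] H))) := by
    have := (hanti.isClosedEmbedding T.uniformContinuous).isClosed_range
    rw [LinearMap.coe_range]; exact this
  -- inner product identities
  have hQinner : ∀ a b : H, ⟪Q a, b⟫ = ⟪a, Q b⟫ := fun a b => by
    conv_lhs => rw [← hQsa.adjoint_eq]
    exact ContinuousLinearMap.adjoint_inner_left Q b a
  have hPinner : ∀ a b : H, ⟪P a, b⟫ = ⟪a, P b⟫ := fun a b => by
    conv_lhs => rw [← hPsa.adjoint_eq]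
    exact ContinuousLinearMap.adjoint_inner_left P b a
  have hbot : (LinearMap.range T.toLinearMap)ᗮ = ⊥ := by
    rw [Submodule.eq_bot_iff]
    intro y hy
    rw [Submodule.mem_orthogonal] at hy
    have hyQ : Q (y : H) = (y : H) := hQfix y
    have hPy : P (y : H) = 0 := by
      have hx : (P (y : H)) ∈ LinearMap.range (P : H →ₗ[ℂ] H) := ⟨(y : H), rfl⟩
      have h1 : ⟪(T ⟨P (y : H), hx⟩ : H), (y : H)⟫ = 0 := by
        exact hy (T ⟨P (y : H), hx⟩) ⟨_, rfl⟩
      have h2 : ⟪Q (P (y : H)), (y : H)⟫ = 0 := h1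
      rw [hQinner, hyQ] at h2
      -- h2 : ⟪P y, y⟫ = 0
      have h3 : ⟪P (y : H), P (y : H)⟫ = 0 := by
        rw [hPinner]
        rw [show P (P (y : H)) = P (y : H) from
          ContinuousLinearMap.ext_iff.1 hPidem (y : H), ← hPinner, h2]
      exact inner_self_eq_zero.1 h3
    have hnorm_y : ‖(y : H)‖ ≤ d * ‖(y : H)‖ := by
      have := (P - Q).le_opNorm (y : H)
      rw [ContinuousLinearMap.sub_apply, hPy, hyQ] at this
      simpa using this
    have : ‖(y : H)‖ = 0 := by nlinarith [norm_nonneg (y : H)]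
    have : (y : H) = 0 := norm_eq_zero.1 this
    exact Subtype.ext this
  haveI : CompleteSpace (LinearMap.range T.toLinearMap) := hclosed.completeSpace_coe
  have htop : LinearMap.range T.toLinearMap = ⊤ := Submodule.orthogonal_eq_bot_iff.1 hbot
  haveI hsub : Subsingleton ((LinearMap.range (Q : H →ₗ[ℂ] H)) ⧸ LinearMap.range T.toLinearMap) := by
    rw [Submodule.Quotient.subsingleton_iff]
    exact htop
  refine ⟨⟨?_, ?_, hclosed⟩, ?_⟩
  · rw [hker]; infer_instance
  · infer_instance
  · rw [hker, hbot, finrank_bot, finrank_bot]; simp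
end

section
/- The Uehling function satisfies the closed-form identity: for k ≠ 0, (1/2)∫₀¹ (1−x²) log(1 + k²(1−x²)/4) dx = (1/3)[(1 − 2/k²)√(1 + 4/k²) · log((√(1+4/k²)+1)/(√(1+4/k²)−1)) + 4/k² − 5/3]. -/
set_option maxHeartbeats 1000000 in
/-- closed-form Uehling–Serber identity for the Uehling function, `k ≠ 0`. -/
theorem uehling_closed_form (k : ℝ) (hk : k ≠ 0) :
    (1 / 2) * ∫ x in (0 : ℝ)..1, (1 - x ^ 2) * Real.log (1 + k ^ 2 * (1 - x ^ 2) / 4) =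
      (1 / 3) * ((1 - 2 / k ^ 2) * Real.sqrt (1 + 4 / k ^ 2) *
          Real.log ((Real.sqrt (1 + 4 / k ^ 2) + 1) / (Real.sqrt (1 + 4 / k ^ 2) - 1))
        + 4 / k ^ 2 - 5 / 3) := by
  have hk2 : (0:ℝ) < k ^ 2 := by positivity
  set s : ℝ := Real.sqrt (1 + 4 / k ^ 2) with hs
  have h4 : (0:ℝ) < 4 / k ^ 2 := by positivity
  have hs2 : s ^ 2 = 1 + 4 / k ^ 2 := Real.sq_sqrt (by linarith)
  have hs1 : 1 < s := by
    nlinarith [Real.sqrt_nonneg (1 + 4 / k ^ 2)]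
  -- antiderivative
  set G : ℝ → ℝ := fun x =>
    (x - x ^ 3 / 3) * Real.log (1 + k ^ 2 * (1 - x ^ 2) / 4) + (2 / 9) * x ^ 3
      - (2 / 3) * (2 - 4 / k ^ 2) * x
      + (s / 3) * (2 - 4 / k ^ 2) * (Real.log (s + x) - Real.log (s - x)) with hG
  have hderiv : ∀ x ∈ Set.uIcc (0:ℝ) 1,
      HasDerivAt G ((1 - x ^ 2) * Real.log (1 + k ^ 2 * (1 - x ^ 2) / 4)) x := by
    intro x hx
    rw [Set.uIcc_of_le (by norm_num : (0:ℝ) ≤ 1)] at hx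
    obtain ⟨hx0, hx1⟩ := hx
    have hx2 : x ^ 2 ≤ 1 := by nlinarith
    have hu : (0:ℝ) < 1 + k ^ 2 * (1 - x ^ 2) / 4 := by
      have := mul_nonneg hk2.le (by linarith : (0:ℝ) ≤ 1 - x ^ 2)
      linarith
    have hsp : (0:ℝ) < s + x := by linarith
    have hsm : (0:ℝ) < s - x := by linarith
    have h1 : HasDerivAt (fun x : ℝ => x - x ^ 3 / 3) (1 - x ^ 2) x := by
      have := (hasDerivAt_id x).sub ((hasDerivAt_pow 3 x).div_const 3)
      refine this.congr_deriv ?_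
      ring
    have h2 : HasDerivAt (fun x : ℝ => 1 + k ^ 2 * (1 - x ^ 2) / 4)
        (-(k ^ 2 * x / 2)) x := by
      have := (((hasDerivAt_pow 2 x).const_sub 1).const_mul (k ^ 2)).div_const 4
      have := this.const_add 1
      refine this.congr_deriv ?_
      ring
    have h2l : HasDerivAt (fun x : ℝ => Real.log (1 + k ^ 2 * (1 - x ^ 2) / 4))
        (-(k ^ 2 * x / 2) / (1 + k ^ 2 * (1 - x ^ 2) / 4)) x := h2.log hu.ne'
    have h3 : HasDerivAt (fun x : ℝ => Real.log (s + x)) (1 / (s + x)) x := by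
      have := ((hasDerivAt_id x).const_add s).log hsp.ne'
      exact this
    have h4' : HasDerivAt (fun x : ℝ => Real.log (s - x)) (-1 / (s - x)) x := by
      have := ((hasDerivAt_id x).const_sub s).log hsm.ne'
      exact this
    have hD : HasDerivAt G
        ((1 - x ^ 2) * Real.log (1 + k ^ 2 * (1 - x ^ 2) / 4)
          + (x - x ^ 3 / 3) * (-(k ^ 2 * x / 2) / (1 + k ^ 2 * (1 - x ^ 2) / 4))
          + (2 / 9) * (3 * x ^ 2) - (2 / 3) * (2 - 4 / k ^ 2) * 1
          + (s / 3) * (2 - 4 / k ^ 2) * (1 / (s + x) - -1 / (s - x))) x := by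
      exact ((((h1.mul h2l).add (((hasDerivAt_pow 3 x).const_mul (2/9 : ℝ))) ).sub
        ((hasDerivAt_id x).const_mul ((2 / 3) * (2 - 4 / k ^ 2)))).add
        (((h3.sub h4')).const_mul ((s / 3) * (2 - 4 / k ^ 2))))
    have hk4 : k ^ 2 = 4 / (s ^ 2 - 1) := by
      rw [hs2]; field_simp; ring
    have h4k : 4 / k ^ 2 = s ^ 2 - 1 := by rw [hs2]; ring
    have hd1 : s ^ 2 - 1 ≠ 0 := by nlinarith
    have hR : (x - x ^ 3 / 3) * (-(k ^ 2 * x / 2) / (1 + k ^ 2 * (1 - x ^ 2) / 4))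
        + (2 / 9) * (3 * x ^ 2) - (2 / 3) * (2 - 4 / k ^ 2) * 1
        + (s / 3) * (2 - 4 / k ^ 2) * (1 / (s + x) - -1 / (s - x)) = 0 := by
      have hsx : s ^ 2 - x ^ 2 ≠ 0 := by nlinarith
      have hu2 : 1 + 4 / (s ^ 2 - 1) * (1 - x ^ 2) / 4 = (s ^ 2 - x ^ 2) / (s ^ 2 - 1) := by
        field_simp
        ring
      have hq : -(4 / (s ^ 2 - 1) * x / 2) / ((s ^ 2 - x ^ 2) / (s ^ 2 - 1))
          = -2 * x / (s ^ 2 - x ^ 2) := by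
        field_simp
        ring
      rw [h4k, hk4, hu2, hq]
      field_simp
      ring
    convert hD using 1
    linarith [hR]
  have hint : IntervalIntegrable
      (fun x => (1 - x ^ 2) * Real.log (1 + k ^ 2 * (1 - x ^ 2) / 4)) MeasureTheory.volume 0 1 := by
    apply ContinuousOn.intervalIntegrable
    apply ContinuousOn.mul (by fun_prop)
    apply ContinuousOn.log (by fun_prop)
    intro x hx
    rw [Set.uIcc_of_le (by norm_num : (0:ℝ) ≤ 1)] at hx
    have hx2 : x ^ 2 ≤ 1 := by nlinarith [hx.1, hx.2]
    have := mul_nonneg hk2.le (by linarith : (0:ℝ) ≤ 1 - x ^ 2)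
    positivity
  have key := intervalIntegral.integral_eq_sub_of_hasDerivAt hderiv hint
  rw [key]
  have hG1 : G 1 = 2 / 9 - (2 / 3) * (2 - 4 / k ^ 2)
      + (s / 3) * (2 - 4 / k ^ 2) * (Real.log (s + 1) - Real.log (s - 1)) := by
    simp only [hG]
    norm_num
  have hG0 : G 0 = 0 := by
    simp only [hG]
    norm_num
  rw [hG1, hG0]
  rw [← Real.log_div (by linarith) (by linarith)]
  field_simp
  ring
end

section
/- Let A be a self-adjoint operator on a Hilbert space with spectral gap: γ ∉ σ(A), dist(γ, σ(A)) ≥ δ > 0. Then the integral (1/2π)∫_{−∞}^{∞} (A − γ + iη)^{−1} dη converges (as a strong improper integral) and equals (1/2) − P, where P = χ_{(−∞,γ)}(A) is the spectral projection onto the part of the spectrum below γ. -/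
open Filter MeasureTheory Real

noncomputable def ggAux (γ η x : ℝ) : ℝ := (x - γ) / ((x - γ)^2 + η^2)
noncomputable def kkAux (γ η x : ℝ) : ℝ := 1 / ((x - γ)^2 + η^2)

lemma arctanLeSelfAux {t : ℝ} (ht : 0 ≤ t) : arctan t ≤ t := by
  rcases eq_or_lt_of_le ht with h | h
  · simp [← h]
  · have h1 : 0 < arctan t := by
      have := arctan_strictMono h
      rwa [arctan_zero] at this
    have h2 := Real.lt_tan h1 (arctan_lt_pi_div_two t)
    rw [tan_arctan] at h2
    exact h2.le

lemma scalarIntAux (c : ℝ) (hc : c ≠ 0) (R : ℝ) :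
    ∫ η in (-R)..R, c / (c^2 + η^2) = 2 * arctan (R / c) := by
  have heq : (fun η : ℝ => c / (c^2 + η^2)) = fun η : ℝ => c⁻¹ * (1 + (η/c)^2)⁻¹ := by
    funext η
    have hd : 0 < c^2 + η^2 := by positivity
    field_simp
  rw [heq, intervalIntegral.integral_const_mul,
    intervalIntegral.inv_mul_integral_comp_div (f := fun t => (1 + t^2)⁻¹) c,
    integral_inv_one_add_sq, neg_div, arctan_neg]
  ring

lemma pointwiseEstAux (δ M : ℝ) (hδ : 0 < δ) (c : ℝ) (hc : δ ≤ |c|) (hM : |c| ≤ M)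
    (R : ℝ) (hR : 0 < R) :
    |π⁻¹ * arctan (R / c) - (1/2 - (if c < 0 then (1:ℝ) else 0))| ≤ M / R := by
  have hπ : (0:ℝ) < π := pi_pos
  have hπ1 : π⁻¹ ≤ 1 := by
    rw [inv_le_one₀ hπ]
    nlinarith [pi_gt_three]
  have hc0 : c ≠ 0 := by intro h; rw [h] at hc; simp at hc; linarith
  rcases lt_or_gt_of_ne hc0 with hneg | hpos
  · have hRc : R / c < 0 := div_neg_of_pos_of_neg hR hneg
    have e1 : arctan (c / R) = -(π/2) - arctan (R/c) := by
      rw [← inv_div R c]; exact arctan_inv_of_neg hRc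
    have e2 : π⁻¹ * arctan (R/c) - (1/2 - 1) = -(π⁻¹ * arctan (c/R)) := by
      rw [e1]; field_simp; ring
    rw [if_pos hneg, e2, abs_neg, abs_mul, abs_of_pos (inv_pos.mpr hπ)]
    have h0 : (0:ℝ) ≤ -(c/R) := by
      have : c / R < 0 := div_neg_of_neg_of_pos hneg hR
      linarith
    have h4 : |arctan (c/R)| = arctan (-(c/R)) := by
      rw [arctan_neg (c/R)]
      apply abs_of_nonpos
      have : arctan (c/R) ≤ arctan 0 := arctan_strictMono.monotone (by linarith)
      rwa [arctan_zero] at this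
    have h5 : arctan (-(c/R)) ≤ -(c/R) := arctanLeSelfAux h0
    have h6 : -(c/R) ≤ M/R := by
      rw [← neg_div]
      apply div_le_div_of_nonneg_right ?_ hR.le |>.trans_eq rfl
      have : |c| = -c := abs_of_neg hneg
      linarith
    calc π⁻¹ * |arctan (c/R)| ≤ 1 * (M/R) := by
          apply mul_le_mul hπ1 (by rw [h4]; exact h5.trans h6) (abs_nonneg _) zero_le_one
      _ = M/R := one_mul _
  · have hRc : 0 < R / c := div_pos hR hpos
    have e1 : arctan (c / R) = π/2 - arctan (R/c) := by
      rw [← inv_div R c]; exact arctan_inv_of_pos hRc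
    have e2 : π⁻¹ * arctan (R/c) - (1/2 - 0) = -(π⁻¹ * arctan (c/R)) := by
      rw [e1]; field_simp; ring
    rw [if_neg (by linarith : ¬ c < 0), e2, abs_neg, abs_mul, abs_of_pos (inv_pos.mpr hπ)]
    have h0 : (0:ℝ) ≤ c/R := le_of_lt (div_pos hpos hR)
    have h4 : |arctan (c/R)| = arctan (c/R) := by
      apply abs_of_nonneg
      have : arctan 0 ≤ arctan (c/R) := arctan_strictMono.monotone h0
      rwa [arctan_zero] at this
    have h5 : arctan (c/R) ≤ c/R := arctanLeSelfAux h0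
    have h6 : c/R ≤ M/R := by
      apply div_le_div_of_nonneg_right ?_ hR.le |>.trans_eq rfl
      have : |c| = c := abs_of_pos hpos
      linarith
    calc π⁻¹ * |arctan (c/R)| ≤ 1 * (M/R) := by
          apply mul_le_mul hπ1 (by rw [h4]; exact h5.trans h6) (abs_nonneg _) zero_le_one
      _ = M/R := one_mul _

section OperatorAux

variable {H : Type*} [NormedAddCommGroup H] [InnerProductSpace ℂ H] [CompleteSpace H]
variable (A : H →L[ℂ] H) (hA : IsSelfAdjoint A) (γ δ : ℝ) (hδ : 0 < δ)
  (hspec : ∀ x ∈ spectrum ℝ A, δ ≤ |x - γ|)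

include hδ hspec in
lemma denomPosAux : ∀ x ∈ spectrum ℝ A, ∀ η : ℝ, 0 < (x - γ)^2 + η^2 := by
  intro x hx η
  have h1 : δ ≤ |x - γ| := hspec x hx
  have h2 : δ^2 ≤ (x - γ)^2 := by nlinarith [sq_abs (x - γ), abs_nonneg (x - γ)]
  nlinarith [sq_nonneg η]

include hδ hspec in
lemma subNeAux (x : ℝ) (hx : x ∈ spectrum ℝ A) : x - γ ≠ 0 := by
  intro h
  have := hspec x hx
  rw [h] at this
  simp at this
  linarith

include hδ hspec in
lemma ggContOnAux (η : ℝ) : ContinuousOn (ggAux γ η) (spectrum ℝ A) := by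
  apply ContinuousOn.div (by fun_prop) (by fun_prop)
  exact fun x hx => (denomPosAux A γ δ hδ hspec x hx η).ne'

include hδ hspec in
lemma kkContOnAux (η : ℝ) : ContinuousOn (kkAux γ η) (spectrum ℝ A) := by
  apply ContinuousOn.div (by fun_prop) (by fun_prop)
  exact fun x hx => (denomPosAux A γ δ hδ hspec x hx η).ne'

include hA hδ hspec in
lemma keyInverseAux (η : ℝ) :
    (A - ((γ : ℂ) - (η : ℂ) * Complex.I) • 1) *
      (cfc (ggAux γ η) A - ((η : ℂ) * Complex.I) • cfc (kkAux γ η) A) = 1 := by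
  have hgc := ggContOnAux A γ δ hδ hspec η
  have hkc := kkContOnAux A γ δ hδ hspec η
  have hgc' : ContinuousOn (fun x : ℝ => x * ggAux γ η x) (spectrum ℝ A) := by fun_prop
  have hkc' : ContinuousOn (fun x : ℝ => x * kkAux γ η x) (spectrum ℝ A) := by fun_prop
  have hgcs : ContinuousOn (fun x : ℝ => γ • ggAux γ η x) (spectrum ℝ A) := hgc.const_smul γ
  have hkcs : ContinuousOn (fun x : ℝ => (η^2 : ℝ) • kkAux γ η x) (spectrum ℝ A) :=
    hkc.const_smul (η^2 : ℝ)
  have hkcg : ContinuousOn (fun x : ℝ => γ • kkAux γ η x) (spectrum ℝ A) := hkc.const_smul γ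
  set u := cfc (ggAux γ η) A with hu
  set v := cfc (kkAux γ η) A with hv
  have hAu : cfc (fun x : ℝ => x * ggAux γ η x) A = A * u := by
    rw [cfc_mul (a := A) _ _ (by fun_prop) hgc, cfc_id' ℝ A]
  have hAv : cfc (fun x : ℝ => x * kkAux γ η x) A = A * v := by
    rw [cfc_mul (a := A) _ _ (by fun_prop) hkc, cfc_id' ℝ A]
  have hone : A * u - γ • u + (η^2 : ℝ) • v = 1 := by
    have e1 : cfc (fun x : ℝ => (x * ggAux γ η x - γ • ggAux γ η x) + (η^2 : ℝ) • kkAux γ η x) A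
        = 1 := by
      rw [show (1 : H →L[ℂ] H) = cfc (fun _ : ℝ => (1:ℝ)) A from (cfc_one ℝ A).symm]
      apply cfc_congr
      intro x hx
      have hd := (denomPosAux A γ δ hδ hspec x hx η).ne'
      simp only [ggAux, kkAux, smul_eq_mul]
      field_simp
    rw [cfc_add (a := A) (fun x => x * ggAux γ η x - γ • ggAux γ η x)
        (fun x => (η^2 : ℝ) • kkAux γ η x) (hgc'.sub hgcs) hkcs,
      cfc_sub (a := A) _ _ hgc' hgcs,
      cfc_smul (a := A) γ (ggAux γ η) hgc, cfc_smul (a := A) (η^2 : ℝ) (kkAux γ η) hkc,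
      hAu] at e1
    exact e1
  have hzero : u - A * v + γ • v = 0 := by
    have e2 : cfc (fun x : ℝ => (ggAux γ η x - x * kkAux γ η x) + γ • kkAux γ η x) A = 0 := by
      rw [show (0 : H →L[ℂ] H) = cfc (fun _ : ℝ => (0:ℝ)) A from (cfc_zero ℝ A).symm]
      apply cfc_congr
      intro x hx
      have hd := (denomPosAux A γ δ hδ hspec x hx η).ne'
      simp only [ggAux, kkAux, smul_eq_mul]
      field_simp
      ring
    rw [cfc_add (a := A) (fun x => ggAux γ η x - x * kkAux γ η x)
        (fun x => γ • kkAux γ η x) (hgc.sub hkc') hkcg,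
      cfc_sub (a := A) _ _ hgc hkc',
      cfc_smul (a := A) γ (kkAux γ η) hkc, hAv] at e2
    exact e2
  set w : ℂ := (η : ℂ) * Complex.I with hw
  have hcw : ((γ : ℂ) - w) * w = ((η^2 : ℝ) : ℂ) + (γ : ℂ) * w := by
    rw [hw]
    push_cast
    ring_nf
    rw [Complex.I_sq]
    ring
  have expand : (A - ((γ : ℂ) - w) • 1) * (u - w • v)
      = (A * u - γ • u + (η^2 : ℝ) • v) + w • (u - A * v + γ • v) := by
    have h1 : ((γ : ℂ)) • u = γ • u := Complex.coe_smul γ u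
    have h2 : ((γ : ℂ)) • v = γ • v := Complex.coe_smul γ v
    have h3 : (((η^2 : ℝ)) : ℂ) • v = (η^2 : ℝ) • v := Complex.coe_smul _ v
    rw [sub_mul, mul_sub, mul_sub, smul_mul_assoc, smul_mul_assoc, one_mul, one_mul,
      mul_smul_comm, sub_smul, smul_smul, hcw, add_smul, h1, h3,
      show ((γ:ℂ) * w) • v = w • (γ • v) from by rw [mul_comm, mul_smul, h2]]
    module
  rw [expand, hone, hzero, smul_zero, add_zero]

include hA hδ hspec in
lemma resEqAux (Res : ℝ → H →L[ℂ] H)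
    (hRes : ∀ η : ℝ,
      (A - ((γ : ℂ) - (η : ℂ) * Complex.I) • 1) * Res η = 1 ∧
      Res η * (A - ((γ : ℂ) - (η : ℂ) * Complex.I) • 1) = 1) (η : ℝ) :
    Res η = cfc (ggAux γ η) A - ((η : ℂ) * Complex.I) • cfc (kkAux γ η) A := by
  have h1 := keyInverseAux A hA γ δ hδ hspec η
  have h2 := (hRes η).2
  calc Res η = Res η * ((A - ((γ : ℂ) - (η : ℂ) * Complex.I) • 1) *
        (cfc (ggAux γ η) A - ((η : ℂ) * Complex.I) • cfc (kkAux γ η) A)) := by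
        rw [h1, mul_one]
    _ = (Res η * (A - ((γ : ℂ) - (η : ℂ) * Complex.I) • 1)) *
        (cfc (ggAux γ η) A - ((η : ℂ) * Complex.I) • cfc (kkAux γ η) A) := by rw [mul_assoc]
    _ = _ := by rw [h2, one_mul]

include hA hδ hspec in
lemma ggCfcContAux : Continuous fun η : ℝ => cfc (ggAux γ η) A := by
  have huncur : Continuous fun p : ℝ × (spectrum ℝ A) => ggAux γ p.1 (p.2 : ℝ) := by
    apply Continuous.div (by fun_prop) (by fun_prop)
    exact fun p => (denomPosAux A γ δ hδ hspec p.2 p.2.2 p.1).ne'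
  have hcm : Continuous fun η : ℝ =>
      (⟨_, ((ggContOnAux A γ δ hδ hspec η)).restrict⟩ : C(spectrum ℝ A, ℝ)) :=
    (ContinuousMap.curry ⟨_, huncur⟩).continuous
  have : (fun η : ℝ => cfc (ggAux γ η) A) = fun η : ℝ =>
      cfcL (a := A) hA (⟨_, ((ggContOnAux A γ δ hδ hspec η)).restrict⟩ : C(spectrum ℝ A, ℝ)) := by
    funext η
    exact cfc_apply (ggAux γ η) A hA (ggContOnAux A γ δ hδ hspec η)
  rw [this]
  exact (cfcL (a := A) hA).continuous.comp hcm

include hA hδ hspec in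
lemma kkCfcContAux : Continuous fun η : ℝ => cfc (kkAux γ η) A := by
  have huncur : Continuous fun p : ℝ × (spectrum ℝ A) => kkAux γ p.1 (p.2 : ℝ) := by
    apply Continuous.div (by fun_prop) (by fun_prop)
    exact fun p => (denomPosAux A γ δ hδ hspec p.2 p.2.2 p.1).ne'
  have hcm : Continuous fun η : ℝ =>
      (⟨_, ((kkContOnAux A γ δ hδ hspec η)).restrict⟩ : C(spectrum ℝ A, ℝ)) :=
    (ContinuousMap.curry ⟨_, huncur⟩).continuous
  have : (fun η : ℝ => cfc (kkAux γ η) A) = fun η : ℝ =>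
      cfcL (a := A) hA (⟨_, ((kkContOnAux A γ δ hδ hspec η)).restrict⟩ : C(spectrum ℝ A, ℝ)) := by
    funext η
    exact cfc_apply (kkAux γ η) A hA (kkContOnAux A γ δ hδ hspec η)
  rw [this]
  exact (cfcL (a := A) hA).continuous.comp hcm

include hA hδ hspec in
lemma opIntAux (R : ℝ) (hR : 0 < R) :
    ∫ η in (-R)..R, cfc (ggAux γ η) A
      = cfc (fun x : ℝ => 2 * arctan (R / (x - γ))) A := by
  have hle : -R ≤ R := by linarith
  have hd := denomPosAux A γ δ hδ hspec
  rw [intervalIntegral.integral_of_le hle]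
  haveI : IsFiniteMeasure (volume.restrict (Set.Ioc (-R) R)) :=
    ⟨by rw [Measure.restrict_apply_univ]; exact measure_Ioc_lt_top⟩
  rw [← cfc_integral (μ := volume.restrict (Set.Ioc (-R) R)) (fun η x => ggAux γ η x)
      (fun _ => δ⁻¹) A ?hcont ?hbound (hasFiniteIntegral_const _) hA]
  case hcont =>
    show ContinuousOn (fun p : ℝ × ℝ => (p.2 - γ) / ((p.2 - γ)^2 + p.1^2)) _
    apply ContinuousOn.div (by fun_prop) (by fun_prop)
    exact fun p hp => (hd p.2 hp.2 p.1).ne'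
  case hbound =>
    refine Eventually.of_forall ?_
    intro η x hx
    have hd1 := hd x hx η
    have h1 : δ ≤ |x - γ| := hspec x hx
    simp only [ggAux, Real.norm_eq_abs]
    rw [abs_div, abs_of_pos hd1, div_le_iff₀ hd1]
    rw [le_inv_mul_iff₀ hδ]
    nlinarith [mul_le_mul_of_nonneg_right h1 (abs_nonneg (x - γ)), sq_abs (x - γ), sq_nonneg η]
  · apply cfc_congr
    intro x hx
    have hc : x - γ ≠ 0 := subNeAux A γ δ hδ hspec x hx
    show (∫ η in Set.Ioc (-R) R, ggAux γ η x) = 2 * arctan (R / (x - γ))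
    rw [← intervalIntegral.integral_of_le hle]
    simp only [ggAux]
    exact scalarIntAux (x - γ) hc R

include hδ hspec in
lemma indContOnAux :
    ContinuousOn (fun x : ℝ => if x < γ then (1:ℝ) else 0) (spectrum ℝ A) := by
  intro x hx
  apply ContinuousAt.continuousWithinAt
  rcases lt_or_gt_of_ne (subNeAux A γ δ hδ hspec x hx) with hneg | hpos
  · apply Filter.EventuallyEq.continuousAt (y := (1:ℝ))
    filter_upwards [Iio_mem_nhds (by linarith : x < γ)] with y hy
    simp [Set.mem_Iio.mp hy]
  · apply Filter.EventuallyEq.continuousAt (y := (0:ℝ))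
    filter_upwards [Ioi_mem_nhds (by linarith : γ < x)] with y hy
    simp [not_lt_of_gt (Set.mem_Ioi.mp hy)]

include hδ hspec in
lemma arctanContOnAux (R : ℝ) :
    ContinuousOn (fun x : ℝ => π⁻¹ * arctan (R / (x - γ))) (spectrum ℝ A) := by
  apply ContinuousOn.mul continuousOn_const
  apply Real.continuous_arctan.comp_continuousOn
  exact ContinuousOn.div continuousOn_const (by fun_prop) (subNeAux A γ δ hδ hspec)

include hδ hspec in
lemma arctanContOnAux2 (R : ℝ) :
    ContinuousOn (fun x : ℝ => 2 * arctan (R / (x - γ))) (spectrum ℝ A) := by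
  apply ContinuousOn.mul continuousOn_const
  apply Real.continuous_arctan.comp_continuousOn
  exact ContinuousOn.div continuousOn_const (by fun_prop) (subNeAux A γ δ hδ hspec)

include hA hδ hspec in
lemma opLimitAux [Nontrivial H] (ψ : H) :
    Tendsto (fun R : ℝ => cfc (fun x : ℝ => π⁻¹ * arctan (R / (x - γ))) A ψ) atTop
      (nhds (cfc (fun x : ℝ => 1/2 - (if x < γ then (1:ℝ) else 0)) A ψ)) := by
  set M : ℝ := ‖A‖ + |γ| with hM
  have hM0 : 0 ≤ M := by positivity
  have hconttar : ContinuousOn (fun x : ℝ => 1/2 - (if x < γ then (1:ℝ) else 0))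
      (spectrum ℝ A) := continuousOn_const.sub (indContOnAux A γ δ hδ hspec)
  rw [tendsto_iff_norm_sub_tendsto_zero]
  apply squeeze_zero' (g := fun R : ℝ => (M * ‖ψ‖) / R)
    (Eventually.of_forall fun _ => norm_nonneg _) ?_ ?_
  · filter_upwards [eventually_gt_atTop (0:ℝ)] with R hR
    have hnorm : ‖cfc (fun x : ℝ => π⁻¹ * arctan (R / (x - γ))) A
        - cfc (fun x : ℝ => 1/2 - (if x < γ then (1:ℝ) else 0)) A‖ ≤ M / R := by
      rw [← cfc_sub (a := A) _ _ (arctanContOnAux A γ δ hδ hspec R) hconttar]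
      apply norm_cfc_le (by positivity)
      intro x hx
      have hcx : δ ≤ |x - γ| := hspec x hx
      have hMx : |x - γ| ≤ M := by
        have h1 : |x| ≤ ‖A‖ := by
          have := spectrum.norm_le_norm_of_mem hx
          rwa [Real.norm_eq_abs] at this
        have h2 : |x - γ| ≤ |x| + |γ| := abs_sub x γ
        linarith
      have hest := pointwiseEstAux δ M hδ (x - γ) hcx hMx R hR
      rw [Real.norm_eq_abs]
      simpa [sub_neg] using hest
    calc ‖cfc (fun x : ℝ => π⁻¹ * arctan (R / (x - γ))) A ψ
          - cfc (fun x : ℝ => 1/2 - (if x < γ then (1:ℝ) else 0)) A ψ‖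
        = ‖(cfc (fun x : ℝ => π⁻¹ * arctan (R / (x - γ))) A
            - cfc (fun x : ℝ => 1/2 - (if x < γ then (1:ℝ) else 0)) A) ψ‖ := by
          rw [ContinuousLinearMap.sub_apply]
      _ ≤ ‖cfc (fun x : ℝ => π⁻¹ * arctan (R / (x - γ))) A
            - cfc (fun x : ℝ => 1/2 - (if x < γ then (1:ℝ) else 0)) A‖ * ‖ψ‖ :=
          ContinuousLinearMap.le_opNorm _ _
      _ ≤ (M / R) * ‖ψ‖ := mul_le_mul_of_nonneg_right hnorm (norm_nonneg ψ)
      _ = (M * ‖ψ‖) / R := by ring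
  · exact Tendsto.div_atTop tendsto_const_nhds tendsto_id

end OperatorAux

/-- Cauchy/resolvent representation of the spectral projection: if `A` is
self-adjoint with `dist(γ, σ(A)) ≥ δ > 0`, and `Res η` denotes the resolvent
`(A − γ + iη)^{−1}`, then for every vector `ψ` the strong improper integral
`(1/2π)∫ (A − γ + iη)^{−1} ψ dη` converges to `(1/2 − P)ψ`, where
`P = χ_{(−∞,γ)}(A)` is the spectral projection below `γ` (realized here through the
continuous functional calculus, the indicator being continuous on `σ(A)`). -/
theorem cauchy_formula_spectral_projection {H : Type*} [NormedAddCommGroup H]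
    [InnerProductSpace ℂ H] [CompleteSpace H]
    (A : H →L[ℂ] H) (hA : IsSelfAdjoint A)
    (γ δ : ℝ) (hδ : 0 < δ)
    (hspec : ∀ x ∈ spectrum ℝ A, δ ≤ |x - γ|)
    (Res : ℝ → H →L[ℂ] H)
    (hRes : ∀ η : ℝ,
      (A - ((γ : ℂ) - (η : ℂ) * Complex.I) • 1) * Res η = 1 ∧
      Res η * (A - ((γ : ℂ) - (η : ℂ) * Complex.I) • 1) = 1) :
    ∀ ψ : H,
      Tendsto (fun R : ℝ => (1 / (2 * Real.pi)) • ∫ η in (-R)..R, Res η ψ)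
        atTop
        (nhds (((1 : ℝ) / 2) • ψ -
          cfc (fun x : ℝ => if x < γ then (1 : ℝ) else 0) A ψ)) := by
  intro ψ
  rcases subsingleton_or_nontrivial H with hs | hn
  · have : (fun R : ℝ => (1 / (2 * Real.pi)) • ∫ η in (-R)..R, Res η ψ)
        = fun _ : ℝ => (((1 : ℝ) / 2) • ψ -
          cfc (fun x : ℝ => if x < γ then (1 : ℝ) else 0) A ψ) :=
      funext fun _ => Subsingleton.elim _ _
    rw [this]
    exact tendsto_const_nhds
  have hgcont := ggCfcContAux A hA γ δ hδ hspec
  have hkcont := kkCfcContAux A hA γ δ hδ hspec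
  have hgψ : Continuous fun η : ℝ => cfc (ggAux γ η) A ψ := by
    exact (ContinuousLinearMap.apply ℂ H ψ).continuous.comp hgcont
  have hkψ : Continuous fun η : ℝ => ((η:ℂ) * Complex.I) • cfc (kkAux γ η) A ψ := by
    apply Continuous.smul (by fun_prop)
    exact (ContinuousLinearMap.apply ℂ H ψ).continuous.comp hkcont
  have key : ∀ R : ℝ, 0 < R →
      (1 / (2 * Real.pi)) • (∫ η in (-R)..R, Res η ψ)
        = cfc (fun x : ℝ => π⁻¹ * arctan (R / (x - γ))) A ψ := by
    intro R hR
    have hsplit : ∫ η in (-R)..R, Res η ψ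
        = (∫ η in (-R)..R, cfc (ggAux γ η) A ψ)
          - ∫ η in (-R)..R, ((η:ℂ) * Complex.I) • cfc (kkAux γ η) A ψ := by
      rw [← intervalIntegral.integral_sub (hgψ.intervalIntegrable _ _)
        (hkψ.intervalIntegrable _ _)]
      apply intervalIntegral.integral_congr
      intro η _
      show Res η ψ = _
      rw [resEqAux A hA γ δ hδ hspec Res hRes η]
      simp
    have hodd : ∫ η in (-R)..R, ((η:ℂ) * Complex.I) • cfc (kkAux γ η) A ψ = 0 := by
      set F := fun η : ℝ => ((η:ℂ) * Complex.I) • cfc (kkAux γ η) A ψ with hF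
      have hFodd : ∀ η, F (-η) = -F η := by
        intro η
        have hkk : kkAux γ (-η) = kkAux γ η := by
          funext x; simp [kkAux, neg_sq]
        simp [hF, hkk, neg_smul]
      have h1 : ∫ η in (-R)..R, F (-η) = ∫ η in (-R)..R, F η := by
        rw [intervalIntegral.integral_comp_neg F]
        rw [neg_neg]
      have h2 : ∫ η in (-R)..R, F (-η) = -∫ η in (-R)..R, F η := by
        simp_rw [hFodd]
        rw [intervalIntegral.integral_neg]
      have h3 : ∫ η in (-R)..R, F η = -∫ η in (-R)..R, F η := h1.symm.trans h2
      have h5 : (2:ℝ) • (∫ η in (-R)..R, F η) = 0 := by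
        rw [two_smul]
        nth_rewrite 2 [h3]
        rw [add_neg_cancel]
      have := smul_eq_zero.mp h5
      simpa using this
    have happ : ∫ η in (-R)..R, cfc (ggAux γ η) A ψ = (∫ η in (-R)..R, cfc (ggAux γ η) A) ψ :=
      (ContinuousLinearMap.intervalIntegral_apply (hgcont.intervalIntegrable _ _) ψ).symm
    rw [hsplit, hodd, sub_zero, happ, opIntAux A hA γ δ hδ hspec R hR]
    have harc := arctanContOnAux2 A γ δ hδ hspec R
    have hsmul : cfc (fun x : ℝ => π⁻¹ * arctan (R / (x - γ))) A
        = (1 / (2 * Real.pi)) • cfc (fun x : ℝ => 2 * arctan (R / (x - γ))) A := by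
      rw [← cfc_smul (a := A) (1 / (2 * Real.pi)) _ harc]
      apply cfc_congr
      intro x _
      have hπ : Real.pi ≠ 0 := pi_ne_zero
      simp only [smul_eq_mul]
      field_simp
    rw [hsmul, ContinuousLinearMap.smul_apply]
  have htarget : ((1 : ℝ) / 2) • ψ - cfc (fun x : ℝ => if x < γ then (1 : ℝ) else 0) A ψ
      = cfc (fun x : ℝ => 1/2 - (if x < γ then (1:ℝ) else 0)) A ψ := by
    rw [cfc_sub (a := A) _ _ continuousOn_const (indContOnAux A γ δ hδ hspec),
      ContinuousLinearMap.sub_apply]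
    congr 1
    rw [cfc_const _ _ hA, Algebra.algebraMap_eq_smul_one, ContinuousLinearMap.smul_apply,
      ContinuousLinearMap.one_apply]
  rw [htarget]
  apply Tendsto.congr' ?_ (opLimitAux A hA γ δ hδ hspec ψ)
  filter_upwards [eventually_gt_atTop (0:ℝ)] with R hR
  exact (key R hR).symm
end
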